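/- Let b and β be admissible drifts. Then the function L₁ : [0,1] → [0,∞] defined by L₁(t) = G₁((1-t)b + tβ) is convex, i.e., G₁((1-t)b + tβ) ≤ (1-t)·G₁(b) + t·G₁(β) for all t ∈ [0,1]. -/

import Mathlib

open MeasureTheory Set Real
open scoped ENNReal

noncomputable section

namespace DiffusiveSearch

/-- `b` is piecewise continuous and locally bounded on `s`. -/
def PCLB (b : ℝ → ℝ) (s : Set ℝ) : Prop :=
  (∃ E : Set ℝ, E.Countable ∧ ContinuousOn b (s \ E)) ∧
  ∀ K : Set ℝ, IsCompact K → K ⊆ s → ∃ M : ℝ, ∀ x ∈ K, |b x| ≤ M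

/-- The left edge `A₋(μ)` of the support of the negative part of the target
distribution: `inf {x < 0 : μ₋((-∞,x]) > 0}`, as an extended real number. -/
def Aminus (ν : Measure ℝ) : EReal :=
  sInf ((fun x : ℝ => (x : EReal)) '' {x : ℝ | x < 0 ∧ 0 < ν (Iic x)})

/-- The right edge `A₊(μ)` of the support of the positive part of the target
distribution: `sup {x > 0 : μ₊([x,∞)) > 0}`, as an extended real number. -/
def Aplus (ν : Measure ℝ) : EReal :=
  sSup ((fun x : ℝ => (x : EReal)) '' {x : ℝ | 0 < x ∧ 0 < ν (Ici x)})

/-- The open real interval with extended-real endpoints. -/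
def io (l r : EReal) : Set ℝ := {x : ℝ | l < (x : EReal) ∧ (x : EReal) < r}

/-- `∫_0^x b(y) dy`. -/
def Bint (b : ℝ → ℝ) (x : ℝ) : ℝ := ∫ y in (0:ℝ)..x, b y

/-- The scale weight `exp((2/D)∫_0^x b(y) dy)`, as an extended nonnegative real. -/
def w (D : ℝ) (b : ℝ → ℝ) (x : ℝ) : ℝ≥0∞ := ENNReal.ofReal (Real.exp ((2/D) * Bint b x))

/-- `b` is an admissible drift: piecewise continuous and locally bounded on
`(A₋, A₊)`, with finite scale integral (positive recurrence). -/
def Admissible (D : ℝ) (Am Ap : EReal) (b : ℝ → ℝ) : Prop :=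
  PCLB b (io Am Ap) ∧ (∫⁻ x in io Am Ap, w D b x) < ⊤

/-- The tail `μ̄₋(x) = μ₋((-∞,x))`. -/
def tailm (μm : Measure ℝ) (x : ℝ) : ℝ := (μm (Iio x)).toReal

/-- The tail `μ̄₊(x) = μ₊((x,∞))`. -/
def tailp (μp : Measure ℝ) (x : ℝ) : ℝ := (μp (Ioi x)).toReal

/-- The functional `G₁(b)`; `(2/D)·G₁(b)` is the expected search time. -/
def G1 (D p : ℝ) (μm μp : Measure ℝ) (b : ℝ → ℝ) : ℝ≥0∞ :=
  ENNReal.ofReal (1 - p) *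
    ∫⁻ a in io (Aminus μm) 0,
      ENNReal.ofReal (tailm μm a * Real.exp (-(2/D) * Bint b a)) *
        (∫⁻ z in io (a : EReal) (Aplus μp), w D b z)
  + ENNReal.ofReal p *
    ∫⁻ a in io 0 (Aplus μp),
      ENNReal.ofReal (tailp μp a * Real.exp (-(2/D) * Bint b a)) *
        (∫⁻ z in io (Aminus μm) (a : EReal), w D b z)

/-- `I₋ = ∫_{A₋(μ)}^0 μ̄₋(x)^{1/2} dx`, with values in `[0,∞]`. -/
def Im (μm : Measure ℝ) : ℝ≥0∞ :=
  ∫⁻ x in io (Aminus μm) 0, ENNReal.ofReal (Real.sqrt (tailm μm x))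

/-- `I₊ = ∫_0^{A₊(μ)} μ̄₊(x)^{1/2} dx`, with values in `[0,∞]`. -/
def Ip (μp : Measure ℝ) : ℝ≥0∞ :=
  ∫⁻ x in io 0 (Aplus μp), ENNReal.ofReal (Real.sqrt (tailp μp x))

/-- The square root balance condition: `I₋, I₊` finite and
`I₊/I₋ = ((1-p)·log(1-p))/(p·log p)`. -/
def SRBC (p : ℝ) (μm μp : Measure ℝ) : Prop :=
  Im μm ≠ ⊤ ∧ Ip μp ≠ ⊤ ∧
    (Ip μp).toReal / (Im μm).toReal = ((1 - p) * Real.log (1 - p)) / (p * Real.log p)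

/-- The value `V(μ) = (2/D)·[((1-p)/|log p|)·I₋² + (p/|log(1-p)|)·I₊²]`. -/
def Vval (D p : ℝ) (μm μp : Measure ℝ) : ℝ :=
  (2/D) * (((1 - p) / |Real.log p|) * ((Im μm).toReal)^2
    + (p / |Real.log (1 - p)|) * ((Ip μp).toReal)^2)

/-- The candidate optimal drift `b₀`, expressed through densities `fm` of `μ₋`
and `fp` of `μ₊` (so that `μ̄₋' = fm` and `μ̄₊' = -fp`). -/
def b0 (D p : ℝ) (μm μp : Measure ℝ) (fm fp : ℝ → ℝ) (x : ℝ) : ℝ :=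
  if x < 0 then
    D * ((1/4) * (fm x / tailm μm x)
      - |Real.log p| / (2 * (Im μm).toReal) * Real.sqrt (tailm μm x))
  else
    D * ((1/4) * (-(fp x) / tailp μp x)
      + |Real.log (1 - p)| / (2 * (Ip μp).toReal) * Real.sqrt (tailp μp x))

/-- `μ₋` restricted to `(A₋(μ),0)` is absolutely continuous with piecewise
continuous, locally bounded density `fm`. -/
def NiceDensityM (μm : Measure ℝ) (fm : ℝ → ℝ) : Prop :=
  PCLB fm (io (Aminus μm) 0) ∧
    μm.restrict (io (Aminus μm) 0) =
      (volume.restrict (io (Aminus μm) 0)).withDensity (fun x => ENNReal.ofReal (fm x))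

/-- `μ₊` restricted to `(0,A₊(μ))` is absolutely continuous with piecewise
continuous, locally bounded density `fp`. -/
def NiceDensityP (μp : Measure ℝ) (fp : ℝ → ℝ) : Prop :=
  PCLB fp (io 0 (Aplus μp)) ∧
    μp.restrict (io 0 (Aplus μp)) =
      (volume.restrict (io 0 (Aplus μp))).withDensity (fun x => ENNReal.ofReal (fp x))

lemma io_isOpen (l r : EReal) : IsOpen (io l r) := by
  have : io l r = Real.toEReal ⁻¹' (Ioo l r) := rfl
  rw [this]; exact isOpen_Ioo.preimage continuous_coe_real_ereal

lemma mem_io {l r : EReal} {x : ℝ} : x ∈ io l r ↔ l < (x:EReal) ∧ (x:EReal) < r := Iff.rfl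

lemma uIcc_subset_io {l r : EReal} {x y : ℝ} (hx : x ∈ io l r) (hy : y ∈ io l r) :
    uIcc x y ⊆ io l r := by
  intro z hz
  rcases hz with ⟨h1, h2⟩
  constructor
  · rcases le_total x y with h | h
    · simp [h] at h1; exact lt_of_lt_of_le hx.1 (EReal.coe_le_coe_iff.mpr h1)
    · simp [h] at h1; exact lt_of_lt_of_le hy.1 (EReal.coe_le_coe_iff.mpr h1)
  · rcases le_total x y with h | h
    · simp [h] at h2; exact lt_of_le_of_lt (EReal.coe_le_coe_iff.mpr h2) hy.2
    · simp [h] at h2; exact lt_of_le_of_lt (EReal.coe_le_coe_iff.mpr h2) hx.2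

lemma PCLB.intervalIntegrable {l r : EReal} {b : ℝ → ℝ} (hb : PCLB b (io l r))
    {x y : ℝ} (hx : x ∈ io l r) (hy : y ∈ io l r) :
    IntervalIntegrable b volume x y := by
  obtain ⟨⟨E, hEc, hEcont⟩, hbd⟩ := hb
  have hsub : uIcc x y ⊆ io l r := uIcc_subset_io hx hy
  obtain ⟨M, hM⟩ := hbd (uIcc x y) isCompact_uIcc hsub
  have hEnull : (volume : Measure ℝ) E = 0 := hEc.measure_zero _
  have hmeas : MeasurableSet (io l r \ E) :=
    (io_isOpen l r).measurableSet.diff hEc.measurableSet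
  have haem : AEMeasurable b (volume.restrict (io l r \ E)) :=
    hEcont.aemeasurable hmeas
  have heq : (volume : Measure ℝ).restrict (uIcc x y) =
      volume.restrict (uIcc x y \ E) := by
    refine Measure.restrict_congr_set ?_
    refine (MeasureTheory.ae_eq_set.mpr ⟨?_, ?_⟩)
    · refine measure_mono_null (fun z hz => ?_) hEnull
      by_contra h; exact hz.2 ⟨hz.1, h⟩
    · simp [Set.diff_diff_right]
  have haem2 : AEMeasurable b (volume.restrict (uIcc x y)) := by
    rw [heq]
    exact haem.mono_measure (Measure.restrict_mono (diff_subset_diff_left hsub) le_rfl)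
  have hInt : IntegrableOn b (uIcc x y) volume := by
    haveI : IsFiniteMeasure ((volume : Measure ℝ).restrict (uIcc x y)) := by
      constructor
      rw [Measure.restrict_apply_univ]
      exact measure_Icc_lt_top
    refine ⟨haem2.aestronglyMeasurable, HasFiniteIntegral.of_bounded (C := M) ?_⟩
    exact ae_restrict_of_forall_mem measurableSet_uIcc fun z hz => by
        simpa [Real.norm_eq_abs] using hM z hz
  exact hInt.intervalIntegrable


lemma mem_io_min {l r : EReal} {x y : ℝ} (hx : x ∈ io l r) (hy : y ∈ io l r) :
    min x y ∈ io l r := by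
  rcases le_total x y with h | h
  · simpa [h] using hx
  · simpa [h] using hy

lemma mem_io_max {l r : EReal} {x y : ℝ} (hx : x ∈ io l r) (hy : y ∈ io l r) :
    max x y ∈ io l r := by
  rcases le_total x y with h | h
  · simpa [h] using hy
  · simpa [h] using hx

lemma PCLB.continuousOn_Bint {l r : EReal} {b : ℝ → ℝ} (hb : PCLB b (io l r))
    (h0 : (0:ℝ) ∈ io l r) : ContinuousOn (Bint b) (io l r) := by
  intro x0 hx0
  apply ContinuousAt.continuousWithinAt
  obtain ⟨ε, hε, hball⟩ := Metric.isOpen_iff.mp (io_isOpen l r) x0 hx0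
  have hIcc : Icc (x0 - ε/2) (x0 + ε/2) ⊆ io l r := by
    intro z hz
    apply hball
    rw [Metric.mem_ball, Real.dist_eq, abs_lt]
    constructor <;> linarith [hz.1, hz.2]
  have hm : x0 - ε/2 ∈ io l r := hIcc ⟨le_refl _, by linarith⟩
  have hM : x0 + ε/2 ∈ io l r := hIcc ⟨by linarith, le_refl _⟩
  have hint : IntervalIntegrable b volume (min 0 (x0 - ε/2)) (max 0 (x0 + ε/2)) :=
    hb.intervalIntegrable (mem_io_min h0 hm) (mem_io_max h0 hM)
  have hcw : ContinuousWithinAt (Bint b) (Icc (x0 - ε/2) (x0 + ε/2)) x0 :=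
    intervalIntegral.continuousWithinAt_primitive (measure_singleton _) hint
  exact hcw.continuousAt (Icc_mem_nhds (by linarith) (by linarith))

lemma Bint_mix {l r : EReal} {b β : ℝ → ℝ} (hb : PCLB b (io l r)) (hβ : PCLB β (io l r))
    (h0 : (0:ℝ) ∈ io l r) (t : ℝ) {x : ℝ} (hx : x ∈ io l r) :
    Bint (fun y => (1 - t) * b y + t * β y) x = (1 - t) * Bint b x + t * Bint β x := by
  have hib := hb.intervalIntegrable h0 hx
  have hiβ := hβ.intervalIntegrable h0 hx
  unfold Bint
  rw [intervalIntegral.integral_add (hib.const_mul _) (hiβ.const_mul _),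
    intervalIntegral.integral_const_mul, intervalIntegral.integral_const_mul]

lemma exp_convex {t : ℝ} (ht0 : 0 ≤ t) (ht1 : t ≤ 1) (X Y : ℝ) :
    Real.exp ((1 - t) * X + t * Y) ≤ (1 - t) * Real.exp X + t * Real.exp Y := by
  have := convexOn_exp.2 (Set.mem_univ X) (Set.mem_univ Y) (show (0:ℝ) ≤ 1 - t by linarith) ht0 (show (1 - t) + t = 1 by ring)
  simpa [smul_eq_mul] using this


lemma w_aemeasurable {D : ℝ} {l r : EReal} {b : ℝ → ℝ} (hb : PCLB b (io l r))
    (h0 : (0:ℝ) ∈ io l r) {S : Set ℝ} (hSsub : S ⊆ io l r) :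
    AEMeasurable (w D b) (volume.restrict S) := by
  have hw : ContinuousOn (w D b) (io l r) :=
    ENNReal.continuous_ofReal.comp_continuousOn
      (Real.continuous_exp.comp_continuousOn
        (continuousOn_const.mul (hb.continuousOn_Bint h0)))
  exact (hw.aemeasurable (io_isOpen l r).measurableSet).mono_measure
    (Measure.restrict_mono hSsub le_rfl)

lemma key_step {D : ℝ} {l r : EReal} {b β : ℝ → ℝ}
    (hbP : PCLB b (io l r)) (hβP : PCLB β (io l r)) (h0 : (0:ℝ) ∈ io l r)
    {t : ℝ} (ht0 : 0 ≤ t) (ht1 : t ≤ 1) {c : ℝ} (hc : 0 ≤ c)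
    {a : ℝ} (ha : a ∈ io l r) {S : Set ℝ} (hSm : MeasurableSet S) (hSsub : S ⊆ io l r) :
    ENNReal.ofReal (c * Real.exp (-(2/D) * Bint (fun x => (1-t)*b x + t*β x) a)) *
        ∫⁻ z in S, w D (fun x => (1-t)*b x + t*β x) z
      ≤ ENNReal.ofReal (1-t) *
          (ENNReal.ofReal (c * Real.exp (-(2/D) * Bint b a)) * ∫⁻ z in S, w D b z)
        + ENNReal.ofReal t *
          (ENNReal.ofReal (c * Real.exp (-(2/D) * Bint β a)) * ∫⁻ z in S, w D β z) := by
  set k := 2/D with hk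
  set mix := fun x => (1-t)*b x + t*β x with hmix
  have hma : Bint mix a = (1-t) * Bint b a + t * Bint β a := Bint_mix hbP hβP h0 t ha
  have hpt : ∀ z ∈ S,
      ENNReal.ofReal (c * Real.exp (-k * Bint mix a)) * w D mix z
        ≤ ENNReal.ofReal (1-t) *
            (ENNReal.ofReal (c * Real.exp (-k * Bint b a)) * w D b z)
          + ENNReal.ofReal t *
            (ENNReal.ofReal (c * Real.exp (-k * Bint β a)) * w D β z) := by
    intro z hz
    have hmz : Bint mix z = (1-t) * Bint b z + t * Bint β z :=
      Bint_mix hbP hβP h0 t (hSsub hz)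
    have e1 : ENNReal.ofReal (c * Real.exp (-k * Bint mix a)) * w D mix z
        = ENNReal.ofReal (c * Real.exp ((1-t) * (-k * Bint b a + k * Bint b z)
            + t * (-k * Bint β a + k * Bint β z))) := by
      rw [w, ← ENNReal.ofReal_mul (mul_nonneg hc (Real.exp_nonneg _)), mul_assoc, ← Real.exp_add]
      congr 2
      rw [hma, hmz, hk]; ring
    rw [e1]
    have e2 : ENNReal.ofReal (c * ((1-t) * Real.exp (-k * Bint b a + k * Bint b z)
          + t * Real.exp (-k * Bint β a + k * Bint β z)))
        = ENNReal.ofReal (1-t) *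
            (ENNReal.ofReal (c * Real.exp (-k * Bint b a)) * w D b z)
          + ENNReal.ofReal t *
            (ENNReal.ofReal (c * Real.exp (-k * Bint β a)) * w D β z) := by
      have h1t : (0:ℝ) ≤ 1 - t := by linarith
      have n1 : (0:ℝ) ≤ c * Real.exp (-k * Bint b a) := mul_nonneg hc (Real.exp_nonneg _)
      have n2 : (0:ℝ) ≤ c * Real.exp (-k * Bint β a) := mul_nonneg hc (Real.exp_nonneg _)
      rw [w, w, ← ENNReal.ofReal_mul n1, ← ENNReal.ofReal_mul n2,
        ← ENNReal.ofReal_mul h1t, ← ENNReal.ofReal_mul ht0,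
        ← ENNReal.ofReal_add
          (mul_nonneg h1t (mul_nonneg n1 (Real.exp_nonneg _)))
          (mul_nonneg ht0 (mul_nonneg n2 (Real.exp_nonneg _)))]
      congr 1
      rw [Real.exp_add, Real.exp_add]; ring
    rw [← e2]
    exact ENNReal.ofReal_le_ofReal
      (mul_le_mul_of_nonneg_left (exp_convex ht0 ht1 _ _) hc)
  calc ENNReal.ofReal (c * Real.exp (-k * Bint mix a)) * ∫⁻ z in S, w D mix z
      = ∫⁻ z in S, ENNReal.ofReal (c * Real.exp (-k * Bint mix a)) * w D mix z :=
        (lintegral_const_mul' _ _ ENNReal.ofReal_ne_top).symm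
    _ ≤ ∫⁻ z in S, (ENNReal.ofReal (1-t) *
            (ENNReal.ofReal (c * Real.exp (-k * Bint b a)) * w D b z)
          + ENNReal.ofReal t *
            (ENNReal.ofReal (c * Real.exp (-k * Bint β a)) * w D β z)) := by
        refine lintegral_mono_ae (ae_restrict_of_forall_mem hSm hpt)
    _ = (∫⁻ z in S, ENNReal.ofReal (1-t) *
            (ENNReal.ofReal (c * Real.exp (-k * Bint b a)) * w D b z))
        + ∫⁻ z in S, ENNReal.ofReal t *
            (ENNReal.ofReal (c * Real.exp (-k * Bint β a)) * w D β z) := by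
        refine lintegral_add_left' ?_ _
        exact ((w_aemeasurable hbP h0 hSsub).const_mul _).const_mul _
    _ = ENNReal.ofReal (1-t) *
          (ENNReal.ofReal (c * Real.exp (-k * Bint b a)) * ∫⁻ z in S, w D b z)
        + ENNReal.ofReal t *
          (ENNReal.ofReal (c * Real.exp (-k * Bint β a)) * ∫⁻ z in S, w D β z) := by
        rw [lintegral_const_mul' _ _ ENNReal.ofReal_ne_top,
          lintegral_const_mul' _ _ ENNReal.ofReal_ne_top,
          lintegral_const_mul' _ _ ENNReal.ofReal_ne_top,
          lintegral_const_mul' _ _ ENNReal.ofReal_ne_top]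


lemma Aplus_pos (μp : Measure ℝ) [IsProbabilityMeasure μp] (hμp : μp (Iic 0) = 0) :
    (0:EReal) < Aplus μp := by
  have hne : μp (Ioi 0) ≠ 0 := by
    intro h
    have : μp univ ≤ μp (Iic 0) + μp (Ioi 0) := by
      rw [← Iic_union_Ioi (a := (0:ℝ))]; exact measure_union_le _ _
    rw [hμp, h, measure_univ] at this
    simp at this
  have hx : ∃ x : ℝ, 0 < x ∧ μp (Ici x) ≠ 0 := by
    by_contra h
    push_neg at h
    apply hne
    refine measure_mono_null (fun y hy => ?_) (measure_iUnion_null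
      (fun n : ℕ => h (1/((n:ℝ)+1)) (by positivity)))
    obtain ⟨n, hn⟩ := exists_nat_one_div_lt (show (0:ℝ) < y from hy)
    exact mem_iUnion.mpr ⟨n, hn.le⟩
  obtain ⟨x, hx0, hxm⟩ := hx
  have hle : (x:EReal) ≤ Aplus μp :=
    le_sSup ⟨x, ⟨hx0, pos_iff_ne_zero.mpr hxm⟩, rfl⟩
  exact lt_of_lt_of_le (by exact_mod_cast hx0) hle

lemma Aminus_neg (μm : Measure ℝ) [IsProbabilityMeasure μm] (hμm : μm (Ici 0) = 0) :
    Aminus μm < 0 := by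
  have hne : μm (Iio 0) ≠ 0 := by
    intro h
    have : μm univ ≤ μm (Iio 0) + μm (Ici 0) := by
      rw [← Iio_union_Ici (a := (0:ℝ))]; exact measure_union_le _ _
    rw [hμm, h, measure_univ] at this
    simp at this
  have hx : ∃ x : ℝ, x < 0 ∧ μm (Iic x) ≠ 0 := by
    by_contra h
    push_neg at h
    apply hne
    refine measure_mono_null (fun y hy => ?_) (measure_iUnion_null
      (fun n : ℕ => h (-(1/((n:ℝ)+1))) (neg_lt_zero.mpr (by positivity))))
    have hy' : (0:ℝ) < -y := by simpa using neg_pos.mpr (mem_Iio.mp hy)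
    obtain ⟨n, hn⟩ := exists_nat_one_div_lt hy'
    exact mem_iUnion.mpr ⟨n, by simp only [mem_Iic]; linarith⟩
  obtain ⟨x, hx0, hxm⟩ := hx
  have hle : Aminus μm ≤ (x:EReal) :=
    sInf_le ⟨x, ⟨hx0, pos_iff_ne_zero.mpr hxm⟩, rfl⟩
  exact lt_of_le_of_lt hle (by exact_mod_cast hx0)


lemma tailm_measurable (μm : Measure ℝ) [IsProbabilityMeasure μm] :
    Measurable (tailm μm) := by
  refine Monotone.measurable (fun x y hxy => ?_)
  exact ENNReal.toReal_mono (measure_ne_top _ _) (measure_mono (Iio_subset_Iio hxy))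

lemma tailp_measurable (μp : Measure ℝ) [IsProbabilityMeasure μp] :
    Measurable (tailp μp) := by
  refine Antitone.measurable (fun x y hxy => ?_)
  exact ENNReal.toReal_mono (measure_ne_top _ _) (measure_mono (Ioi_subset_Ioi hxy))

/-- convexity of `t ↦ G₁((1-t)b + tβ)` on `[0,1]`. -/
theorem G1_convex
    (D p : ℝ) (hD : 0 < D) (hp : 0 < p) (hp1 : p < 1)
    (μm μp : Measure ℝ) [IsProbabilityMeasure μm] [IsProbabilityMeasure μp]
    (hμm : μm (Ici 0) = 0) (hμp : μp (Iic 0) = 0)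
    (b β : ℝ → ℝ)
    (hb : Admissible D (Aminus μm) (Aplus μp) b)
    (hβ : Admissible D (Aminus μm) (Aplus μp) β)
    (t : ℝ) (ht : t ∈ Icc (0:ℝ) 1) :
    G1 D p μm μp (fun x => (1 - t) * b x + t * β x)
      ≤ ENNReal.ofReal (1 - t) * G1 D p μm μp b
        + ENNReal.ofReal t * G1 D p μm μp β := by
  obtain ⟨ht0, ht1⟩ := ht
  obtain ⟨hbP, -⟩ := hb
  obtain ⟨hβP, -⟩ := hβ
  set Am := Aminus μm with hAmdef
  set Ap := Aplus μp with hApdef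
  have hAm : Am < 0 := Aminus_neg μm hμm
  have hAp : (0:EReal) < Ap := Aplus_pos μp hμp
  have h0 : (0:ℝ) ∈ io Am Ap := ⟨by simpa using hAm, by simpa using hAp⟩
  set mix := fun x => (1 - t) * b x + t * β x with hmixdef
  have hsub1 : io Am (0:EReal) ⊆ io Am Ap := fun x hx => ⟨hx.1, lt_trans hx.2 hAp⟩
  have hsub2 : io (0:EReal) Ap ⊆ io Am Ap := fun x hx => ⟨lt_trans hAm hx.1, hx.2⟩
  -- measurability of the integrand of the first part
  have haem1 : ∀ f : ℝ → ℝ, PCLB f (io Am Ap) → AEMeasurable (fun a =>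
      ENNReal.ofReal (tailm μm a * Real.exp (-(2/D) * Bint f a)) *
        (∫⁻ z in io (a : EReal) Ap, w D f z)) (volume.restrict (io Am 0)) := by
    intro f hf
    have h1 : AEMeasurable (fun a => Real.exp (-(2/D) * Bint f a))
        (volume.restrict (io Am 0)) := by
      have hc : ContinuousOn (fun a => Real.exp (-(2/D) * Bint f a)) (io Am 0) :=
        Real.continuous_exp.comp_continuousOn
          (continuousOn_const.mul ((hf.continuousOn_Bint h0).mono hsub1))
      exact hc.aemeasurable (io_isOpen _ _).measurableSet
    have h2 : AEMeasurable (fun a =>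
        ENNReal.ofReal (tailm μm a * Real.exp (-(2/D) * Bint f a)))
        (volume.restrict (io Am 0)) :=
      ENNReal.measurable_ofReal.comp_aemeasurable
        (((tailm_measurable μm).aemeasurable).mul h1)
    have h3 : Measurable (fun a : ℝ => ∫⁻ z in io (a : EReal) Ap, w D f z) := by
      refine Antitone.measurable (fun x y hxy => ?_)
      refine lintegral_mono' (Measure.restrict_mono (fun z hz => ?_) le_rfl) le_rfl
      exact ⟨lt_of_le_of_lt (EReal.coe_le_coe_iff.mpr hxy) hz.1, hz.2⟩
    exact h2.mul h3.aemeasurable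
  have haem2 : ∀ f : ℝ → ℝ, PCLB f (io Am Ap) → AEMeasurable (fun a =>
      ENNReal.ofReal (tailp μp a * Real.exp (-(2/D) * Bint f a)) *
        (∫⁻ z in io Am (a : EReal), w D f z)) (volume.restrict (io 0 Ap)) := by
    intro f hf
    have h1 : AEMeasurable (fun a => Real.exp (-(2/D) * Bint f a))
        (volume.restrict (io 0 Ap)) := by
      have hc : ContinuousOn (fun a => Real.exp (-(2/D) * Bint f a)) (io 0 Ap) :=
        Real.continuous_exp.comp_continuousOn
          (continuousOn_const.mul ((hf.continuousOn_Bint h0).mono hsub2))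
      exact hc.aemeasurable (io_isOpen _ _).measurableSet
    have h2 : AEMeasurable (fun a =>
        ENNReal.ofReal (tailp μp a * Real.exp (-(2/D) * Bint f a)))
        (volume.restrict (io 0 Ap)) :=
      ENNReal.measurable_ofReal.comp_aemeasurable
        (((tailp_measurable μp).aemeasurable).mul h1)
    have h3 : Measurable (fun a : ℝ => ∫⁻ z in io Am (a : EReal), w D f z) := by
      refine Monotone.measurable (fun x y hxy => ?_)
      refine lintegral_mono' (Measure.restrict_mono (fun z hz => ?_) le_rfl) le_rfl
      exact ⟨hz.1, lt_of_lt_of_le hz.2 (EReal.coe_le_coe_iff.mpr hxy)⟩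
    exact h2.mul h3.aemeasurable
  -- pointwise convexity on the first region
  have hpt1 : ∀ a ∈ io Am (0:EReal),
      ENNReal.ofReal (tailm μm a * Real.exp (-(2/D) * Bint mix a)) *
        (∫⁻ z in io (a : EReal) Ap, w D mix z)
      ≤ ENNReal.ofReal (1 - t) *
          (ENNReal.ofReal (tailm μm a * Real.exp (-(2/D) * Bint b a)) *
            (∫⁻ z in io (a : EReal) Ap, w D b z))
        + ENNReal.ofReal t *
          (ENNReal.ofReal (tailm μm a * Real.exp (-(2/D) * Bint β a)) *
            (∫⁻ z in io (a : EReal) Ap, w D β z)) := by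
    intro a ha
    exact key_step hbP hβP h0 ht0 ht1 ENNReal.toReal_nonneg (hsub1 ha)
      (io_isOpen _ _).measurableSet (fun z hz => ⟨lt_trans (hsub1 ha).1 hz.1, hz.2⟩)
  -- pointwise convexity on the second region
  have hpt2 : ∀ a ∈ io (0:EReal) Ap,
      ENNReal.ofReal (tailp μp a * Real.exp (-(2/D) * Bint mix a)) *
        (∫⁻ z in io Am (a : EReal), w D mix z)
      ≤ ENNReal.ofReal (1 - t) *
          (ENNReal.ofReal (tailp μp a * Real.exp (-(2/D) * Bint b a)) *
            (∫⁻ z in io Am (a : EReal), w D b z))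
        + ENNReal.ofReal t *
          (ENNReal.ofReal (tailp μp a * Real.exp (-(2/D) * Bint β a)) *
            (∫⁻ z in io Am (a : EReal), w D β z)) := by
    intro a ha
    exact key_step hbP hβP h0 ht0 ht1 ENNReal.toReal_nonneg (hsub2 ha)
      (io_isOpen _ _).measurableSet (fun z hz => ⟨hz.1, lt_trans hz.2 (hsub2 ha).2⟩)
  -- integrated convexity on the second region
  have claim2 : (∫⁻ a in io 0 Ap,
        ENNReal.ofReal (tailp μp a * Real.exp (-(2/D) * Bint mix a)) *
          (∫⁻ z in io Am (a : EReal), w D mix z))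
      ≤ ENNReal.ofReal (1 - t) * (∫⁻ a in io 0 Ap,
          ENNReal.ofReal (tailp μp a * Real.exp (-(2/D) * Bint b a)) *
            (∫⁻ z in io Am (a : EReal), w D b z))
        + ENNReal.ofReal t * (∫⁻ a in io 0 Ap,
          ENNReal.ofReal (tailp μp a * Real.exp (-(2/D) * Bint β a)) *
            (∫⁻ z in io Am (a : EReal), w D β z)) := by
    calc (∫⁻ a in io 0 Ap,
          ENNReal.ofReal (tailp μp a * Real.exp (-(2/D) * Bint mix a)) *
            (∫⁻ z in io Am (a : EReal), w D mix z))
        ≤ ∫⁻ a in io 0 Ap,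
          (ENNReal.ofReal (1 - t) *
            (ENNReal.ofReal (tailp μp a * Real.exp (-(2/D) * Bint b a)) *
              (∫⁻ z in io Am (a : EReal), w D b z))
          + ENNReal.ofReal t *
            (ENNReal.ofReal (tailp μp a * Real.exp (-(2/D) * Bint β a)) *
              (∫⁻ z in io Am (a : EReal), w D β z))) :=
          lintegral_mono_ae (ae_restrict_of_forall_mem (io_isOpen _ _).measurableSet hpt2)
      _ = _ := by
          rw [lintegral_add_left' ((haem2 b hbP).const_mul _),
            lintegral_const_mul' _ _ ENNReal.ofReal_ne_top,
            lintegral_const_mul' _ _ ENNReal.ofReal_ne_top]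
  -- combined pointwise bound on the first region, including the constant part
  have hcomb : ∀ a ∈ io Am (0:EReal),
      ENNReal.ofReal (tailm μm a * Real.exp (-(2/D) * Bint mix a)) *
        (∫⁻ z in io (a : EReal) Ap, w D mix z)
      + ENNReal.ofReal p * (∫⁻ a' in io 0 Ap,
          ENNReal.ofReal (tailp μp a' * Real.exp (-(2/D) * Bint mix a')) *
            (∫⁻ z in io Am (a' : EReal), w D mix z))
      ≤ ENNReal.ofReal (1 - t) *
          (ENNReal.ofReal (tailm μm a * Real.exp (-(2/D) * Bint b a)) *
            (∫⁻ z in io (a : EReal) Ap, w D b z)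
          + ENNReal.ofReal p * (∫⁻ a' in io 0 Ap,
              ENNReal.ofReal (tailp μp a' * Real.exp (-(2/D) * Bint b a')) *
                (∫⁻ z in io Am (a' : EReal), w D b z)))
        + ENNReal.ofReal t *
          (ENNReal.ofReal (tailm μm a * Real.exp (-(2/D) * Bint β a)) *
            (∫⁻ z in io (a : EReal) Ap, w D β z)
          + ENNReal.ofReal p * (∫⁻ a' in io 0 Ap,
              ENNReal.ofReal (tailp μp a' * Real.exp (-(2/D) * Bint β a')) *
                (∫⁻ z in io Am (a' : EReal), w D β z))) := by
    intro a ha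
    have h := add_le_add (hpt1 a ha) (mul_le_mul_right claim2 (ENNReal.ofReal p))
    refine h.trans (le_of_eq ?_)
    ring
  -- final assembly
  unfold G1
  rw [← hAmdef, ← hApdef]
  have hstep : (∫⁻ a in io Am 0,
      (ENNReal.ofReal (tailm μm a * Real.exp (-(2/D) * Bint mix a)) *
        (∫⁻ z in io (a : EReal) Ap, w D mix z)
      + ENNReal.ofReal p * (∫⁻ a' in io 0 Ap,
          ENNReal.ofReal (tailp μp a' * Real.exp (-(2/D) * Bint mix a')) *
            (∫⁻ z in io Am (a' : EReal), w D mix z))))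
      ≤ ENNReal.ofReal (1 - t) * (∫⁻ a in io Am 0,
          (ENNReal.ofReal (tailm μm a * Real.exp (-(2/D) * Bint b a)) *
            (∫⁻ z in io (a : EReal) Ap, w D b z)
          + ENNReal.ofReal p * (∫⁻ a' in io 0 Ap,
              ENNReal.ofReal (tailp μp a' * Real.exp (-(2/D) * Bint b a')) *
                (∫⁻ z in io Am (a' : EReal), w D b z))))
        + ENNReal.ofReal t * (∫⁻ a in io Am 0,
          (ENNReal.ofReal (tailm μm a * Real.exp (-(2/D) * Bint β a)) *
            (∫⁻ z in io (a : EReal) Ap, w D β z)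
          + ENNReal.ofReal p * (∫⁻ a' in io 0 Ap,
              ENNReal.ofReal (tailp μp a' * Real.exp (-(2/D) * Bint β a')) *
                (∫⁻ z in io Am (a' : EReal), w D β z)))) := by
    calc _ ≤ ∫⁻ a in io Am 0,
          (ENNReal.ofReal (1 - t) *
            (ENNReal.ofReal (tailm μm a * Real.exp (-(2/D) * Bint b a)) *
              (∫⁻ z in io (a : EReal) Ap, w D b z)
            + ENNReal.ofReal p * (∫⁻ a' in io 0 Ap,
                ENNReal.ofReal (tailp μp a' * Real.exp (-(2/D) * Bint b a')) *
                  (∫⁻ z in io Am (a' : EReal), w D b z)))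
          + ENNReal.ofReal t *
            (ENNReal.ofReal (tailm μm a * Real.exp (-(2/D) * Bint β a)) *
              (∫⁻ z in io (a : EReal) Ap, w D β z)
            + ENNReal.ofReal p * (∫⁻ a' in io 0 Ap,
                ENNReal.ofReal (tailp μp a' * Real.exp (-(2/D) * Bint β a')) *
                  (∫⁻ z in io Am (a' : EReal), w D β z)))) :=
        lintegral_mono_ae (ae_restrict_of_forall_mem (io_isOpen _ _).measurableSet hcomb)
      _ = _ := by
        rw [lintegral_add_left'
            ((show AEMeasurable (fun a => ENNReal.ofReal (tailm μm a * Real.exp (-(2/D) * Bint b a)) *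
                (∫⁻ z in io (a : EReal) Ap, w D b z) + ENNReal.ofReal p * (∫⁻ a' in io 0 Ap,
                ENNReal.ofReal (tailp μp a' * Real.exp (-(2/D) * Bint b a')) *
                  (∫⁻ z in io Am (a' : EReal), w D b z))) (volume.restrict (io Am 0)) from
              (haem1 b hbP).add aemeasurable_const).const_mul _),
          lintegral_const_mul' _ _ ENNReal.ofReal_ne_top,
          lintegral_const_mul' _ _ ENNReal.ofReal_ne_top]
  calc ENNReal.ofReal (1 - p) * (∫⁻ a in io Am 0,
        (ENNReal.ofReal (tailm μm a * Real.exp (-(2/D) * Bint mix a)) *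
          (∫⁻ z in io (a : EReal) Ap, w D mix z)
        + ENNReal.ofReal p * (∫⁻ a' in io 0 Ap,
            ENNReal.ofReal (tailp μp a' * Real.exp (-(2/D) * Bint mix a')) *
              (∫⁻ z in io Am (a' : EReal), w D mix z))))
      ≤ ENNReal.ofReal (1 - p) *
        (ENNReal.ofReal (1 - t) * (∫⁻ a in io Am 0,
          (ENNReal.ofReal (tailm μm a * Real.exp (-(2/D) * Bint b a)) *
            (∫⁻ z in io (a : EReal) Ap, w D b z)
          + ENNReal.ofReal p * (∫⁻ a' in io 0 Ap,
              ENNReal.ofReal (tailp μp a' * Real.exp (-(2/D) * Bint b a')) *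
                (∫⁻ z in io Am (a' : EReal), w D b z))))
        + ENNReal.ofReal t * (∫⁻ a in io Am 0,
          (ENNReal.ofReal (tailm μm a * Real.exp (-(2/D) * Bint β a)) *
            (∫⁻ z in io (a : EReal) Ap, w D β z)
          + ENNReal.ofReal p * (∫⁻ a' in io 0 Ap,
              ENNReal.ofReal (tailp μp a' * Real.exp (-(2/D) * Bint β a')) *
                (∫⁻ z in io Am (a' : EReal), w D β z))))) :=
      mul_le_mul_right hstep _
    _ = _ := by ring

end DiffusiveSearch
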